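/- Let a ∈ ℝ and b ∈ ℝ ∪ {+∞} with a < b. Let f : [a,b) → [0,∞) satisfy sup_{[a,b)} f < +∞ and f(x) → 0 as x → b⁻, and let n : [a,b) → [0,∞) be increasing with n(a) > 0, bounded on every interval [a,b'] ⊂ [a,b), and n(x) → +∞ as x → b⁻. Then (1/n(R)) · m^←[n·m^→[f]](R) → 0 as R → b⁻. -/

import Mathlib

open MeasureTheory Set Filter

/-- The right maximization `m^→[f](r) = sup_{x ∈ [r,b)} f x`, for `b ∈ ℝ ∪ {+∞}`. -/
noncomputable def rightMax (b : EReal) (f : ℝ → ℝ) (r : ℝ) : ℝ :=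
  sSup (f '' {x : ℝ | r ≤ x ∧ (x : EReal) < b})

/-- The left maximization `m^←[g](r) = sup_{x ∈ [a,r]} g x`. -/
noncomputable def leftMax (a : ℝ) (g : ℝ → ℝ) (r : ℝ) : ℝ :=
  sSup (g '' Set.Icc a r)

/-- The filter of real numbers tending to `b ∈ ℝ ∪ {+∞}` from the left. -/
noncomputable def toBFilter (b : EReal) : Filter ℝ :=
  Filter.comap (Real.toEReal) (nhdsWithin b (Set.Iio b))

lemma ev_toB (b : EReal) (c : ℝ) (hc : (c : EReal) < b) :
    ∀ᶠ R in toBFilter b, c < R ∧ (R : EReal) < b := by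
  have h1 : Set.Ioi (c : EReal) ∩ Set.Iio b ∈ nhdsWithin b (Set.Iio b) :=
    Filter.inter_mem (mem_nhdsWithin_of_mem_nhds (isOpen_Ioi.mem_nhds hc))
      self_mem_nhdsWithin
  have h2 : Real.toEReal ⁻¹' (Set.Ioi (c : EReal) ∩ Set.Iio b) ∈
      Filter.comap Real.toEReal (nhdsWithin b (Set.Iio b)) :=
    Filter.preimage_mem_comap h1
  rw [toBFilter, Filter.eventually_iff]
  refine Filter.mem_of_superset h2 ?_
  intro R hR
  exact ⟨EReal.coe_lt_coe_iff.mp hR.1, hR.2⟩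

theorem stmt_9 (a : ℝ) (b : EReal) (hab : (a : EReal) < b) (f n : ℝ → ℝ)
    (hf_nonneg : ∀ x : ℝ, a ≤ x → (x : EReal) < b → 0 ≤ f x)
    (hf_bdd : ∃ C : ℝ, ∀ x : ℝ, a ≤ x → (x : EReal) < b → f x ≤ C)
    (hf_zero : Filter.Tendsto f (toBFilter b) (nhds 0))
    (hn_nonneg : ∀ x : ℝ, a ≤ x → (x : EReal) < b → 0 ≤ n x)
    (hn_mono : MonotoneOn n {x : ℝ | a ≤ x ∧ (x : EReal) < b})
    (hn_pos : 0 < n a)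
    (hn_bdd : ∀ b' : ℝ, a ≤ b' → (b' : EReal) < b →
      ∃ C : ℝ, ∀ x ∈ Set.Icc a b', n x ≤ C)
    (hn_top : Filter.Tendsto n (toBFilter b) Filter.atTop) :
    Filter.Tendsto
      (fun R => (n R)⁻¹ * leftMax a (fun t => n t * rightMax b f t) R)
      (toBFilter b) (nhds 0) := by
  obtain ⟨C₀, hC₀⟩ := hf_bdd
  set C := max C₀ 0 with hCdef
  have hC : ∀ x : ℝ, a ≤ x → (x : EReal) < b → f x ≤ C :=
    fun x hx hxb => (hC₀ x hx hxb).trans (le_max_left _ _)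
  have hC0 : 0 ≤ C := le_max_right _ _
  rw [Metric.tendsto_nhds]
  intro ε hε
  have hε4 : (0 : ℝ) < ε / 4 := by linarith
  -- threshold for f
  have hf' : ∀ᶠ x in toBFilter b, dist (f x) 0 < ε / 4 :=
    Metric.tendsto_nhds.mp hf_zero (ε / 4) hε4
  have hbasis : (nhdsWithin b (Set.Iio b)).HasBasis (fun c : EReal => c < b)
      (fun c => Set.Ioo c b) := nhdsLT_basis_of_exists_lt ⟨a, hab⟩
  rw [toBFilter] at hf'
  obtain ⟨c, hcb, hcf⟩ := (hbasis.comap Real.toEReal).eventually_iff.mp hf'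
  obtain ⟨c', hcc', hc'b⟩ := EReal.exists_between_coe_real hcb
  set R₀ := max a c' with hR₀def
  have haR₀ : a ≤ R₀ := le_max_left _ _
  have hR₀b : (R₀ : EReal) < b := by
    rcases le_total a c' with h | h
    · simpa [hR₀def, max_eq_right h] using hc'b
    · simpa [hR₀def, max_eq_left h] using hab
  -- f is small on [R₀, b)
  have hfsmall : ∀ x : ℝ, R₀ ≤ x → (x : EReal) < b → f x ≤ ε / 4 := by
    intro x hx hxb
    have hcx : c < (x : EReal) :=
      lt_of_lt_of_le hcc' (by exact_mod_cast le_trans (le_max_right a c') hx)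
    have := hcf (Set.mem_preimage.mpr ⟨hcx, hxb⟩)
    rw [Real.dist_eq, sub_zero] at this
    exact (le_abs_self _).trans this.le
  -- rightMax bounds
  have hright_le : ∀ t : ℝ, a ≤ t → rightMax b f t ≤ C := by
    intro t ht
    refine Real.sSup_le ?_ hC0
    rintro y ⟨x, ⟨hx1, hx2⟩, rfl⟩
    exact hC x (ht.trans hx1) hx2
  have hright_nonneg : ∀ t : ℝ, a ≤ t → (t : EReal) < b → 0 ≤ rightMax b f t := by
    intro t ht htb
    refine Real.sSup_nonneg ?_
    rintro y ⟨x, ⟨hx1, hx2⟩, rfl⟩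
    exact hf_nonneg x (ht.trans hx1) hx2
  have hright_small : ∀ t : ℝ, R₀ ≤ t → rightMax b f t ≤ ε / 4 := by
    intro t ht
    refine Real.sSup_le ?_ hε4.le
    rintro y ⟨x, ⟨hx1, hx2⟩, rfl⟩
    exact hfsmall x (ht.trans hx1) hx2
  -- bound for n on [a, R₀]
  obtain ⟨C₂, hC₂⟩ := hn_bdd R₀ haR₀ hR₀b
  have hC₂0 : 0 ≤ C₂ := (hn_nonneg a le_rfl hab).trans (hC₂ a ⟨le_rfl, haR₀⟩)
  set K := max 1 (C₂ * C / (ε / 4)) with hKdef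
  have hK1 : (1 : ℝ) ≤ K := le_max_left _ _
  have hK0 : (0 : ℝ) < K := lt_of_lt_of_le one_pos hK1
  filter_upwards [ev_toB b R₀ hR₀b, hn_top.eventually_ge_atTop K] with R hR hnK
  obtain ⟨hR₀R, hRb⟩ := hR
  have haR : a ≤ R := haR₀.trans hR₀R.le
  have hnR0 : (0 : ℝ) < n R := lt_of_lt_of_le hK0 hnK
  -- bound the leftMax
  have hleft_le : leftMax a (fun t => n t * rightMax b f t) R
      ≤ C₂ * C + n R * (ε / 4) := by
    refine Real.sSup_le ?_ (by positivity)
    rintro y ⟨t, ⟨hat, htR⟩, rfl⟩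
    have htb : (t : EReal) < b := lt_of_le_of_lt (by exact_mod_cast htR) hRb
    rcases le_total t R₀ with h | h
    · have h1 : n t * rightMax b f t ≤ C₂ * C :=
        mul_le_mul (hC₂ t ⟨hat, h⟩) (hright_le t hat) (hright_nonneg t hat htb)
          hC₂0
      have : (0:ℝ) ≤ n R * (ε / 4) := by positivity
      linarith
    · have hnt : n t ≤ n R := hn_mono ⟨hat, htb⟩ ⟨haR, hRb⟩ htR
      have h1 : n t * rightMax b f t ≤ n R * (ε / 4) :=
        mul_le_mul hnt (hright_small t h) (hright_nonneg t hat htb)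
          hnR0.le
      have : (0:ℝ) ≤ C₂ * C := by positivity
      linarith
  have hleft_nonneg : 0 ≤ leftMax a (fun t => n t * rightMax b f t) R := by
    refine Real.sSup_nonneg ?_
    rintro y ⟨t, ⟨hat, htR⟩, rfl⟩
    have htb : (t : EReal) < b := lt_of_le_of_lt (by exact_mod_cast htR) hRb
    exact mul_nonneg (hn_nonneg t hat htb) (hright_nonneg t hat htb)
  -- final estimate
  have hterm_nonneg : 0 ≤ (n R)⁻¹ * leftMax a (fun t => n t * rightMax b f t) R :=
    mul_nonneg (inv_nonneg.mpr hnR0.le) hleft_nonneg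
  have hbound : (n R)⁻¹ * leftMax a (fun t => n t * rightMax b f t) R ≤ ε / 2 := by
    have h1 : (n R)⁻¹ * leftMax a (fun t => n t * rightMax b f t) R
        ≤ (n R)⁻¹ * (C₂ * C + n R * (ε / 4)) :=
      mul_le_mul_of_nonneg_left hleft_le (inv_nonneg.mpr hnR0.le)
    have h2 : (n R)⁻¹ * (C₂ * C + n R * (ε / 4))
        = (C₂ * C) / n R + ε / 4 := by
      field_simp
    have h3 : (C₂ * C) / n R ≤ ε / 4 := by
      rw [div_le_iff₀ hnR0]
      have hK2 : C₂ * C / (ε / 4) ≤ K := le_max_right _ _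
      have : C₂ * C ≤ K * (ε / 4) := by
        rw [← div_le_iff₀ hε4] at *
        exact hK2
      nlinarith
    linarith [h1, h2 ▸ h1]
  rw [Real.dist_eq, sub_zero, abs_of_nonneg hterm_nonneg]
  linarith
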